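/- (Multi-split conformal bands are wider) Under assumptions A0 (i.i.d. data), A1 (independent symmetric noise), and A2 (sampling stability: P(||μ̂_n - μ̃||_∞ ≥ η_n) ≤ ρ_n with η_n = o(1), ρ_n = o(n^{-1})), and assuming |Y - μ̃(X)| has continuous distribution, with probability tending to 1 as n → ∞, the N-fold Bonferroni multi-split conformal band C_split^{(N)}(X) = ∩_{j=1}^N C_{split,j}(X) (each split at level 1-α/N) is wider than the single split conformal band C_split(X) at level 1-α. -/

import Mathlib

open MeasureTheory Finset Filter

open scoped Classical ENNReal

section Aux
open ProbabilityTheory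

lemma measurePreserving_comp_inj {S : Type*} [MeasurableSpace S] (Q : Measure S)
    [IsProbabilityMeasure Q] {n M : ℕ} (g : Fin n → Fin M) (hg : Function.Injective g) :
    MeasurePreserving (fun z : Fin M → S => z ∘ g)
      (Measure.pi fun _ => Q) (Measure.pi fun _ => Q) := by
  have hmeas : Measurable (fun z : Fin M → S => z ∘ g) :=
    measurable_pi_lambda _ fun k => measurable_pi_apply (g k)
  refine ⟨hmeas, ?_⟩
  refine (Measure.pi_eq fun s hs => ?_).symm
  rw [Measure.map_apply hmeas (MeasurableSet.univ_pi hs)]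
  have hpre : (fun z : Fin M → S => z ∘ g) ⁻¹' Set.pi Set.univ s
      = Set.pi Set.univ (fun i => if h : ∃ k, g k = i then s h.choose else Set.univ) := by
    ext z
    simp only [Set.mem_preimage, Set.mem_pi, Set.mem_univ, forall_true_left, Function.comp]
    constructor
    · intro hz i
      by_cases h : ∃ k, g k = i
      · rw [dif_pos h]
        have := hz h.choose
        rwa [h.choose_spec] at this
      · simp [h]
    · intro hz k
      have hex : ∃ k', g k' = g k := ⟨k, rfl⟩
      have h1 := hz (g k)
      rw [dif_pos hex] at h1
      have hk : hex.choose = k := hg hex.choose_spec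
      rwa [hk] at h1
  rw [hpre, Measure.pi_pi]
  have h1 : ∀ i ∈ (univ : Finset (Fin M)), i ∉ Finset.image g univ →
      Q (if h : ∃ k, g k = i then s h.choose else Set.univ) = 1 := by
    intro i _ hi
    have h : ¬ ∃ k, g k = i := by
      intro ⟨k, hk⟩; exact hi (Finset.mem_image.2 ⟨k, Finset.mem_univ _, hk⟩)
    rw [dif_neg h]; exact measure_univ
  rw [← Finset.prod_subset (Finset.subset_univ (Finset.image g univ)) h1,
    Finset.prod_image (fun a _ b _ h => hg h)]
  refine Finset.prod_congr rfl fun k _ => ?_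
  have hex : ∃ k', g k' = g k := ⟨k, rfl⟩
  rw [dif_pos hex, hg hex.choose_spec]

lemma pi_eval_preimage {S : Type*} [MeasurableSpace S] (Q : Measure S) [IsProbabilityMeasure Q]
    {n : ℕ} (i : Fin n) (B : Set S) :
    (Measure.pi fun _ : Fin n => Q) ((fun w => w i) ⁻¹' B) = Q B := by
  rw [show ((fun w : Fin n → S => w i) ⁻¹' B) = Function.eval i ⁻¹' B from rfl,
    ← Set.univ_pi_update_univ, Measure.pi_pi]
  refine Finset.prod_eq_single_of_mem i (Finset.mem_univ i) (fun j _ hj => ?_) |>.trans ?_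
  · rw [Function.update_of_ne hj]; exact measure_univ
  · rw [Function.update_self]

lemma indepFun_eval {S : Type*} [MeasurableSpace S] (Q : Measure S) [IsProbabilityMeasure Q]
    {n : ℕ} {i j : Fin n} (hij : i ≠ j) :
    IndepFun (fun w : Fin n → S => w i) (fun w => w j) (Measure.pi fun _ => Q) := by
  rw [indepFun_iff_measure_inter_preimage_eq_mul]
  intro s t hs ht
  have hset : (fun w : Fin n → S => w i) ⁻¹' s ∩ (fun w => w j) ⁻¹' t
      = Set.pi Set.univ (Function.update (Function.update (fun _ => Set.univ) i s) j t) := by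
    ext z
    simp only [Set.mem_inter_iff, Set.mem_preimage, Set.mem_pi, Set.mem_univ, forall_true_left]
    constructor
    · rintro ⟨h1, h2⟩ l
      rcases eq_or_ne l j with rfl | hlj
      · rwa [Function.update_self]
      rcases eq_or_ne l i with rfl | hli
      · rwa [Function.update_of_ne hlj, Function.update_self]
      · rw [Function.update_of_ne hlj, Function.update_of_ne hli]; trivial
    · intro h
      refine ⟨?_, ?_⟩
      · have := h i
        rwa [Function.update_of_ne hij, Function.update_self] at this
      · have := h j
        rwa [Function.update_self] at this
  rw [hset, Measure.pi_pi, pi_eval_preimage, pi_eval_preimage]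
  rw [← Finset.prod_erase_mul _ _ (Finset.mem_univ j)]
  have h2 : i ∈ (Finset.univ : Finset (Fin n)).erase j :=
    Finset.mem_erase.2 ⟨hij, Finset.mem_univ i⟩
  rw [← Finset.prod_erase_mul _ _ h2]
  have h3 : ∀ l ∈ ((Finset.univ : Finset (Fin n)).erase j).erase i,
      Q (Function.update (Function.update (fun _ => Set.univ) i s) j t l) = 1 := by
    intro l hl
    rcases Finset.mem_erase.1 hl with ⟨hli, hl2⟩
    rcases Finset.mem_erase.1 hl2 with ⟨hlj, _⟩
    rw [Function.update_of_ne hlj, Function.update_of_ne hli]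
    exact measure_univ
  rw [Finset.prod_congr rfl h3, Finset.prod_const_one, one_mul,
    Function.update_of_ne hij, Function.update_self, Function.update_self, mul_comm]

lemma chebyshev_count {S : Type*} [MeasurableSpace S] (Q : Measure S) [IsProbabilityMeasure Q]
    {B : Set S} (hB : MeasurableSet B) {n : ℕ} (hn : 1 ≤ n) {ε : ℝ} (hε : 0 < ε) :
    (Measure.pi fun _ : Fin n => Q)
      {w | (n : ℝ) * ε ≤ |((Finset.univ.filter fun i => w i ∈ B).card : ℝ)
        - n * (Q B).toReal|}
      ≤ ENNReal.ofReal (1 / (n * ε ^ 2)) := by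
  set μ : Measure (Fin n → S) := Measure.pi fun _ => Q with hμ
  set p : ℝ := (Q B).toReal with hp
  set X : Fin n → (Fin n → S) → ℝ :=
    fun i => Set.indicator ((fun w => w i) ⁻¹' B) (fun _ => 1) with hX
  have hsetmeas : ∀ i : Fin n, MeasurableSet ((fun w : Fin n → S => w i) ⁻¹' B) :=
    fun i => (measurable_pi_apply i) hB
  have hXmem : ∀ i, MemLp (X i) 2 μ :=
    fun i => memLp_indicator_const 2 (hsetmeas i) 1 (Or.inr (measure_ne_top _ _))
  have hEX : ∀ i, μ[X i] = p := by
    intro i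
    rw [hX]
    rw [integral_indicator_const (1 : ℝ) (hsetmeas i), hμ, measureReal_def, pi_eval_preimage, smul_eq_mul, mul_one]
  have hTmem : MemLp (∑ i, X i) 2 μ := memLp_finset_sum' _ fun i _ => hXmem i
  have hET : μ[∑ i, X i] = n * p := by
    simp only [Finset.sum_apply]
    rw [integral_finset_sum _ fun i _ => (hXmem i).integrable one_le_two]
    simp [hEX]
  have hp1 : p ≤ 1 := by
    rw [hp]
    have := prob_le_one (μ := Q) (s := B)
    calc (Q B).toReal ≤ (1 : ℝ≥0∞).toReal := ENNReal.toReal_mono ENNReal.one_ne_top this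
    _ = 1 := by simp
  have hXsq : ∀ i, X i ^ 2 = X i := by
    intro i
    funext w
    simp only [Pi.pow_apply, hX, Set.indicator_apply]
    split_ifs <;> norm_num
  have hvar : variance (∑ i, X i) μ ≤ n := by
    rw [IndepFun.variance_sum (fun i _ => hXmem i)
      (fun i _ j _ hij => ((indepFun_eval Q hij).comp
        (measurable_const.indicator hB) (measurable_const.indicator hB)))]
    · calc ∑ i : Fin n, variance (X i) μ ≤ ∑ _i : Fin n, (1 : ℝ) := by
            refine Finset.sum_le_sum fun i _ => ?_
            calc variance (X i) μ ≤ μ[X i ^ 2] :=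
                  variance_le_expectation_sq (hXmem i).aestronglyMeasurable
            _ = p := by rw [hXsq i, hEX i]
            _ ≤ 1 := hp1
      _ = n := by simp
  have hc : (0 : ℝ) < n * ε := by positivity
  have hcheb := meas_ge_le_variance_div_sq (μ := μ) hTmem hc
  have hseteq : {w : Fin n → S | (n : ℝ) * ε ≤ |((Finset.univ.filter fun i => w i ∈ B).card : ℝ)
        - n * p|} = {w | (n : ℝ) * ε ≤ |(∑ i, X i) w - μ[∑ i, X i]|} := by
    ext w
    have hcard : ((Finset.univ.filter fun i => w i ∈ B).card : ℝ) = (∑ i, X i) w := by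
      rw [Finset.card_filter]
      push_cast
      simp [hX, Set.indicator_apply]
    simp only [Set.mem_setOf_eq, hcard, hET]
  rw [hseteq]
  refine hcheb.trans (ENNReal.ofReal_le_ofReal ?_)
  rw [div_le_div_iff₀ (by positivity) (by positivity)]
  have hn' : (1:ℝ) ≤ (n:ℝ) := by exact_mod_cast hn
  calc variance (∑ i, X i) μ * (n * ε ^ 2) ≤ (n : ℝ) * (n * ε ^ 2) := by
        refine mul_le_mul_of_nonneg_right hvar (by positivity)
  _ = 1 * (n * ε) ^ 2 := by ring

lemma cdf_exists_eq {Ω : Type*} [MeasurableSpace Ω] (P : Measure Ω) [IsProbabilityMeasure P]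
    {R : Ω → ℝ} (hR : Measurable R) (hR0 : ∀ ω, 0 ≤ R ω)
    (hcont : ∀ t : ℝ, P {ω | R ω = t} = 0) {p : ℝ} (hp : p ∈ Set.Ioo (0:ℝ) 1) :
    ∃ q : ℝ, 0 ≤ q ∧ (P {ω | R ω ≤ q}).toReal = p := by
  set F : ℝ → ℝ := fun t => (P {ω | R ω ≤ t}).toReal with hF
  have hmsets : ∀ t : ℝ, MeasurableSet {ω | R ω ≤ t} := fun t => hR measurableSet_Iic
  have hFmono : Monotone F := by
    intro a b hab
    exact ENNReal.toReal_mono (measure_ne_top _ _)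
      (measure_mono fun ω h => le_trans h hab)
  have hFtop : Tendsto F atTop (nhds 1) := by
    have h1 : Tendsto (fun t => P (R ⁻¹' Set.Iic t)) atTop (nhds (P Set.univ)) := by
      have := tendsto_measure_Iic_atTop (P.map R)
      have hmap : ∀ t : ℝ, (P.map R) (Set.Iic t) = P (R ⁻¹' Set.Iic t) :=
        fun t => Measure.map_apply hR measurableSet_Iic
      have hmapu : (P.map R) Set.univ = P Set.univ := by
        rw [Measure.map_apply hR MeasurableSet.univ, Set.preimage_univ]
      rw [hmapu] at this
      exact this.congr fun t => hmap t
    rw [measure_univ] at h1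
    have := (ENNReal.tendsto_toReal ENNReal.one_ne_top).comp h1
    exact this
  set S : Set ℝ := {t | p ≤ F t} with hS
  have hne : S.Nonempty := by
    rcases (hFtop.eventually (eventually_ge_nhds hp.2)).exists with ⟨t, ht⟩
    exact ⟨t, ht⟩
  have hlb : ∀ t ∈ S, (0:ℝ) ≤ t := by
    intro t ht
    by_contra hneg
    push_neg at hneg
    have : {ω | R ω ≤ t} = ∅ := by
      ext ω; simp only [Set.mem_setOf_eq, Set.mem_empty_iff_false, iff_false]
      intro h; exact absurd (le_trans (hR0 ω) h) (not_le.2 hneg)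
    have : F t = 0 := by rw [hF]; simp [this]
    rw [hS] at ht
    simp only [Set.mem_setOf_eq, this] at ht
    exact absurd ht (not_le.2 hp.1)
  have hbdd : BddBelow S := ⟨0, hlb⟩
  set q : ℝ := sInf S with hq
  refine ⟨q, le_csInf hne hlb, ?_⟩
  have hge : p ≤ F q := by
    have hseq : Tendsto (fun k : ℕ => P {ω | R ω ≤ q + 1 / (k + 1)}) atTop
        (nhds (P {ω | R ω ≤ q})) := by
      have hint : ⋂ k : ℕ, {ω | R ω ≤ q + 1 / (k + 1 : ℝ)} = {ω | R ω ≤ q} := by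
        ext ω
        simp only [Set.mem_iInter, Set.mem_setOf_eq]
        constructor
        · intro h
          by_contra hlt
          push_neg at hlt
          obtain ⟨k, hk⟩ := exists_nat_one_div_lt (sub_pos.2 hlt)
          have := h k
          push_cast at this hk ⊢
          linarith
        · intro h k
          have : (0:ℝ) < 1 / (k+1) := by positivity
          linarith
      have := tendsto_measure_iInter_atTop (μ := P)
        (fun k : ℕ => (hmsets (q + 1 / (k + 1 : ℝ))).nullMeasurableSet)
        (fun a b hab => ?_) ⟨0, measure_ne_top _ _⟩
      · rwa [hint] at this
      · refine Set.setOf_subset_setOf.2 fun ω h => ?_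
        have : (1:ℝ) / (b+1) ≤ 1 / (a+1) := by
          apply one_div_le_one_div_of_le (by positivity)
          exact_mod_cast add_le_add_left (Nat.cast_le.2 hab) 1
        linarith
    have hseq' : Tendsto (fun k : ℕ => F (q + 1 / (k + 1))) atTop (nhds (F q)) :=
      (ENNReal.tendsto_toReal (measure_ne_top _ _)).comp hseq
    refine ge_of_tendsto hseq' (Eventually.of_forall fun k => ?_)
    have hqlt : q < q + 1 / (k + 1 : ℝ) := by
      have : (0:ℝ) < 1 / (k+1) := by positivity
      linarith
    obtain ⟨t, htS, htlt⟩ := exists_lt_of_csInf_lt hne hqlt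
    exact le_trans htS (hFmono htlt.le)
  have hle : F q ≤ p := by
    have hPeq : P {ω | R ω ≤ q} = P {ω | R ω < q} := by
      have hsub : {ω | R ω ≤ q} ⊆ {ω | R ω < q} ∪ {ω | R ω = q} := by
        intro ω h
        rcases lt_or_eq_of_le (show R ω ≤ q from h) with h' | h'
        · exact Or.inl h'
        · exact Or.inr h'
      refine le_antisymm ?_ (measure_mono fun ω h => le_of_lt (show R ω < q from h))
      calc P {ω | R ω ≤ q} ≤ P ({ω | R ω < q} ∪ {ω | R ω = q}) := measure_mono hsub
      _ ≤ P {ω | R ω < q} + P {ω | R ω = q} := measure_union_le _ _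
      _ = P {ω | R ω < q} := by rw [hcont q, add_zero]
    have hunion : ⋃ k : ℕ, {ω | R ω ≤ q - 1 / (k + 1 : ℝ)} = {ω | R ω < q} := by
      ext ω
      simp only [Set.mem_iUnion, Set.mem_setOf_eq]
      constructor
      · rintro ⟨k, hk⟩
        have : (0:ℝ) < 1 / (k+1) := by positivity
        linarith
      · intro h
        obtain ⟨k, hk⟩ := exists_nat_one_div_lt (sub_pos.2 h)
        exact ⟨k, by push_cast at hk ⊢; linarith⟩
    have hseq : Tendsto (fun k : ℕ => P {ω | R ω ≤ q - 1 / (k + 1 : ℝ)}) atTop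
        (nhds (P {ω | R ω < q})) := by
      have := tendsto_measure_iUnion_atTop (μ := P) (s := fun k : ℕ => {ω | R ω ≤ q - 1 / (k + 1 : ℝ)})
        (fun a b hab => ?_)
      · rwa [hunion] at this
      · refine Set.setOf_subset_setOf.2 fun ω h => ?_
        have : (1:ℝ) / (b+1) ≤ 1 / (a+1) := by
          apply one_div_le_one_div_of_le (by positivity)
          exact_mod_cast add_le_add_left (Nat.cast_le.2 hab) 1
        linarith
    have hFq : F q = (P {ω | R ω < q}).toReal := by rw [hF]; simp only; rw [hPeq]
    rw [hFq]
    have hseq' : Tendsto (fun k : ℕ => F (q - 1 / (k + 1))) atTop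
        (nhds ((P {ω | R ω < q}).toReal)) :=
      (ENNReal.tendsto_toReal (measure_ne_top _ _)).comp hseq
    refine le_of_tendsto hseq' (Eventually.of_forall fun k => ?_)
    have hqlt : q - 1 / (k + 1 : ℝ) < q := by
      have : (0:ℝ) < 1 / (k+1) := by positivity
      linarith
    have hnotmem : q - 1 / (k + 1 : ℝ) ∉ S := fun hmem =>
      absurd (csInf_le hbdd hmem) (not_le.2 hqlt)
    rw [hS] at hnotmem
    simp only [Set.mem_setOf_eq, not_le] at hnotmem
    exact hnotmem.le
  exact le_antisymm hle hge

lemma measurable_of_unif_approx {E : Type*} [MeasurableSpace E]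
    (A : (n : ℕ) → (Fin n → E × ℝ) → E → ℝ)
    (hA : ∀ n, Measurable fun p : (Fin n → E × ℝ) × E => A n p.1 p.2)
    (μtil : E → ℝ) (η : ℕ → ℝ) (hη : Tendsto η atTop (nhds 0))
    (hgood : ∀ᶠ n in atTop, ∃ w : Fin n → E × ℝ, ∀ x, |A n w x - μtil x| < η n) :
    Measurable μtil := by
  set g : ℕ → E → ℝ := fun n x =>
    if h : ∃ w : Fin n → E × ℝ, ∀ x', |A n w x' - μtil x'| < η n then A n h.choose x else 0
    with hg
  have hgm : ∀ n, Measurable (g n) := by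
    intro n
    by_cases h : ∃ w : Fin n → E × ℝ, ∀ x', |A n w x' - μtil x'| < η n
    · have heq : g n = fun x => A n h.choose x := by funext x; simp [hg, h]
      rw [heq]
      exact (hA n).comp (measurable_const.prodMk measurable_id)
    · have heq : g n = fun _ => 0 := by funext x; simp [hg, h]
      rw [heq]; exact measurable_const
  refine measurable_of_tendsto_metrizable hgm ?_
  rw [tendsto_pi_nhds]
  intro x
  have hf : Tendsto (fun n => g n x - μtil x) atTop (nhds 0) := by
    refine squeeze_zero_norm' ?_ (by simpa using hη.abs)
    filter_upwards [hgood] with n hn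
    have heq : g n x = A n hn.choose x := by simp [hg, hn]
    rw [Real.norm_eq_abs, heq]
    exact le_trans (hn.choose_spec x).le (le_abs_self _)
  have := hf.add_const (μtil x)
  simpa using this

end Aux

noncomputable def kthSmallest {ι : Type*} (s : Finset ι) (v : ι → ℝ) (k : ℕ) : ℝ :=
  sInf {t : ℝ | k ≤ (s.filter fun i => v i ≤ t).card}

section KS

lemma kthSmallest_bddBelow {n : ℕ} (v : Fin n → ℝ) {k : ℕ} (hk : 1 ≤ k) :
    BddBelow {t : ℝ | k ≤ (Finset.univ.filter fun i => v i ≤ t).card} := by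
  by_cases hn : n = 0
  · subst hn
    refine ⟨0, fun t ht => ?_⟩
    exfalso
    have : (Finset.univ.filter fun i : Fin 0 => v i ≤ t).card = 0 := by simp
    simp only [Set.mem_setOf_eq, this] at ht
    omega
  · have hne : (Finset.univ : Finset (Fin n)).Nonempty :=
      Finset.univ_nonempty_iff.2 (Fin.pos_iff_nonempty.1 (Nat.pos_of_ne_zero hn))
    refine ⟨Finset.univ.inf' hne v, fun t ht => ?_⟩
    simp only [Set.mem_setOf_eq] at ht
    have hcard : 0 < (Finset.univ.filter fun i => v i ≤ t).card := lt_of_lt_of_le hk ht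
    obtain ⟨i, hi⟩ := Finset.card_pos.1 hcard
    rcases Finset.mem_filter.1 hi with ⟨_, hvi⟩
    exact le_trans (Finset.inf'_le v (Finset.mem_univ i)) hvi

lemma kthSmallest_nonempty {n : ℕ} (v : Fin n → ℝ) {k : ℕ} (hkn : k ≤ n) (hn : 1 ≤ n) :
    {t : ℝ | k ≤ (Finset.univ.filter fun i => v i ≤ t).card}.Nonempty := by
  have hne : (Finset.univ : Finset (Fin n)).Nonempty :=
    Finset.univ_nonempty_iff.2 (Fin.pos_iff_nonempty.1 hn)
  refine ⟨(Finset.univ.image v).max' (hne.image v), ?_⟩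
  have heq : (Finset.univ.filter fun i => v i ≤ (Finset.univ.image v).max' (hne.image v))
      = Finset.univ := by
    refine Finset.filter_true_of_mem fun i _ => ?_
    exact Finset.le_max' _ _ (Finset.mem_image_of_mem v (Finset.mem_univ i))
  simp only [Set.mem_setOf_eq, heq, Finset.card_univ, Fintype.card_fin]
  exact hkn

lemma kthSmallest_le_of_count {n : ℕ} (v : Fin n → ℝ) {k : ℕ} (hk : 1 ≤ k) {t : ℝ}
    (h : k ≤ (Finset.univ.filter fun i => v i ≤ t).card) :
    kthSmallest Finset.univ v k ≤ t :=
  csInf_le (kthSmallest_bddBelow v hk) h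

lemma le_kthSmallest_of_count_lt {n : ℕ} (v : Fin n → ℝ) {k : ℕ} (hkn : k ≤ n) {t : ℝ}
    (h : (Finset.univ.filter fun i => v i ≤ t).card < k) :
    t ≤ kthSmallest Finset.univ v k := by
  have hk1 : 1 ≤ k := by omega
  have hn : 1 ≤ n := le_trans hk1 hkn
  refine le_csInf (kthSmallest_nonempty v hkn hn) fun t' ht' => ?_
  simp only [Set.mem_setOf_eq] at ht'
  by_contra hlt
  push_neg at hlt
  have hsub : (Finset.univ.filter fun i => v i ≤ t') ⊆ Finset.univ.filter fun i => v i ≤ t := by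
    intro i hi
    rw [Finset.mem_filter] at hi ⊢
    exact ⟨hi.1, le_trans hi.2 hlt.le⟩
  exact absurd (le_trans ht' (Finset.card_le_card hsub)) (not_le.2 h)

lemma kthSmallest_perturb {n : ℕ} (u v : Fin n → ℝ) {η : ℝ} (huv : ∀ i, u i ≤ v i + η)
    {k : ℕ} (hk : 1 ≤ k) (hkn : k ≤ n) :
    kthSmallest Finset.univ u k ≤ kthSmallest Finset.univ v k + η := by
  have hn : 1 ≤ n := le_trans hk hkn
  have hSv := kthSmallest_nonempty v hkn hn
  have hclaim : ∀ t ∈ {t : ℝ | k ≤ (Finset.univ.filter fun i => v i ≤ t).card},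
      kthSmallest Finset.univ u k ≤ t + η := by
    intro t ht
    simp only [Set.mem_setOf_eq] at ht
    refine kthSmallest_le_of_count u hk ?_
    refine le_trans ht (Finset.card_le_card ?_)
    intro i hi
    rw [Finset.mem_filter] at hi ⊢
    refine ⟨hi.1, ?_⟩
    have := huv i
    have h2 : v i ≤ t := hi.2
    linarith
  have h2 : ∀ t ∈ {t : ℝ | k ≤ (Finset.univ.filter fun i => v i ≤ t).card},
      kthSmallest Finset.univ u k - η ≤ t := fun t ht => by linarith [hclaim t ht]
  have := le_csInf hSv h2
  have hdef : kthSmallest Finset.univ v k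
      = sInf {t : ℝ | k ≤ (Finset.univ.filter fun i => v i ≤ t).card} := rfl
  linarith [hdef ▸ this]

end KS

lemma interval_volume_lt {N : ℕ} (c dd : Fin N → ℝ) (j₀ : Fin N) (D₀ xv t₁ t₂ η' : ℝ)
    (hc : ∀ j, |c j - xv| < η')
    (hD₀ : D₀ ≤ t₁ + η') (hdd : ∀ j, t₂ - η' ≤ dd j)
    (ht₁0 : 0 ≤ t₁) (h3 : 3 * η' < t₂ - t₁) (h2 : 2 * η' < t₂) :
    volume (Set.Icc (c j₀ - D₀) (c j₀ + D₀))
      < volume (⋂ j, Set.Icc (c j - dd j) (c j + dd j)) := by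
  have hsub : Set.Icc (xv - (t₂ - 2*η')) (xv + (t₂ - 2*η'))
      ⊆ ⋂ j, Set.Icc (c j - dd j) (c j + dd j) := by
    intro y hy
    rw [Set.mem_Icc] at hy
    refine Set.mem_iInter.2 fun j => ?_
    have hcj := abs_lt.1 (hc j)
    have hdj := hdd j
    rw [Set.mem_Icc]
    constructor
    · linarith [hy.1, hcj.1, hcj.2]
    · linarith [hy.2, hcj.1, hcj.2]
  calc volume (Set.Icc (c j₀ - D₀) (c j₀ + D₀))
      = ENNReal.ofReal ((c j₀ + D₀) - (c j₀ - D₀)) := Real.volume_Icc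
    _ = ENNReal.ofReal (2*D₀) := by rw [show c j₀ + D₀ - (c j₀ - D₀) = 2*D₀ by ring]
    _ ≤ ENNReal.ofReal (2*t₁ + 2*η') := ENNReal.ofReal_le_ofReal (by linarith)
    _ < ENNReal.ofReal (2*(t₂ - 2*η')) :=
        (ENNReal.ofReal_lt_ofReal_iff (by linarith)).2 (by linarith)
    _ = volume (Set.Icc (xv - (t₂ - 2*η')) (xv + (t₂ - 2*η'))) := by
        rw [Real.volume_Icc]; congr 1; ring
    _ ≤ volume (⋂ j, Set.Icc (c j - dd j) (c j + dd j)) := measure_mono hsub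


set_option maxHeartbeats 2000000 in
/-- Multi-split conformal bands are wider: under A0 (i.i.d. data
from `P`, here `Y = μ(X) + ε`), A1 (ε independent of X, with density symmetric
about 0 and nonincreasing on `[0,∞)`), A2 (sampling stability
`P(‖μ̂_n - μ̃‖_∞ ≥ η_n) ≤ ρ_n` with `η_n = o(1)` and `ρ_n = o(n⁻¹)`), and
continuity of the distribution of `|Y - μ̃(X)|`, with probability tending to 1 as
`n → ∞`, the `N`-fold Bonferroni multi-split band
`C_split^{(N)}(X) = ∩_{j<N} C_{split,j}(X)` (each split at level `1-α/N`, with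
arbitrary splits given by permutations `τ n j` of the `2n` training points) is
wider (in Lebesgue measure, at the new point `X`) than the single split conformal
band `C_split(X)` at level `1-α` (built from the split `τ n 0`). -/
theorem multisplit_wider
    {E : Type*} [MeasurableSpace E]
    (Px : Measure E) [IsProbabilityMeasure Px]
    (Pe : Measure ℝ) [IsProbabilityMeasure Pe]
    (μReg : E → ℝ) (hmreg : Measurable μReg)
    (f₀ : ℝ → ℝ)
    (hPe : Pe = volume.withDensity fun t => ENNReal.ofReal (f₀ t))
    (hsymm : ∀ t, f₀ (-t) = f₀ t)
    (hmono : AntitoneOn f₀ (Set.Ici (0 : ℝ)))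
    (P : Measure (E × ℝ))
    (hP : P = Measure.map (fun q : E × ℝ => (q.1, μReg q.1 + q.2)) (Px.prod Pe))
    (A : (n : ℕ) → (Fin n → E × ℝ) → E → ℝ)
    (hA : ∀ n, Measurable fun p : (Fin n → E × ℝ) × E => A n p.1 p.2)
    (μtil : E → ℝ) (η ρ : ℕ → ℝ)
    (hη : Tendsto η atTop (nhds 0))
    (hρ : Tendsto (fun n : ℕ => (n : ℝ) * ρ n) atTop (nhds 0))
    (hstab : ∀ᶠ n in atTop,
      (Measure.pi fun _ : Fin n => P) {w | ¬ ∀ x, |A n w x - μtil x| < η n}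
        ≤ ENNReal.ofReal (ρ n))
    (hcont : ∀ t : ℝ, P {q : E × ℝ | |q.2 - μtil q.1| = t} = 0)
    (N : ℕ) (hN : 2 ≤ N)
    (τ : (n : ℕ) → Fin N → Equiv.Perm (Fin (n + n)))
    (α : ℝ) (hα : α ∈ Set.Ioo (0 : ℝ) 1) :
    Tendsto
      (fun n =>
        (Measure.pi fun _ : Fin (n + n + 1) => P)
          {z | let fit : Fin N → E → ℝ := fun j =>
                 A n (fun k : Fin n => z ((τ n j (Fin.castAdd n k)).castSucc));
               let d : Fin N → ℝ → ℝ := fun j β =>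
                 kthSmallest Finset.univ
                   (fun k : Fin n =>
                     |(z ((τ n j (Fin.natAdd n k)).castSucc)).2
                       - fit j (z ((τ n j (Fin.natAdd n k)).castSucc)).1|)
                   ⌈((n : ℝ) + 1) * β⌉₊;
               let x : E := (z (Fin.last (n + n))).1;
               volume (Set.Icc (fit ⟨0, by omega⟩ x - d ⟨0, by omega⟩ (1 - α))
                       (fit ⟨0, by omega⟩ x + d ⟨0, by omega⟩ (1 - α)))
                 < volume (⋂ j : Fin N,
                     Set.Icc (fit j x - d j (1 - α / N)) (fit j x + d j (1 - α / N)))})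
      atTop (nhds (1 : ℝ≥0∞)) := by
  obtain ⟨hα0, hα1⟩ := hα
  haveI hPprob : IsProbabilityMeasure P := by
    rw [hP]
    exact Measure.isProbabilityMeasure_map
      ((measurable_fst.prodMk ((hmreg.comp measurable_fst).add measurable_snd)).aemeasurable)
  -- ρ tends to zero
  have hρ0 : Tendsto ρ atTop (nhds 0) := by
    refine squeeze_zero_norm' ?_ (by simpa using hρ.abs)
    filter_upwards [eventually_ge_atTop 1] with n hn
    rw [Real.norm_eq_abs]
    have h1 : (1:ℝ) ≤ (n:ℝ) := by exact_mod_cast hn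
    nlinarith [abs_nonneg (ρ n)]
  -- measurability of μtil
  have hgood : ∀ᶠ n in atTop, ∃ w : Fin n → E × ℝ, ∀ x, |A n w x - μtil x| < η n := by
    have hofreal : Tendsto (fun n => ENNReal.ofReal (ρ n)) atTop (nhds 0) := by
      have := ENNReal.tendsto_ofReal hρ0
      simpa using this
    filter_upwards [hstab, hofreal.eventually_lt_const (by norm_num : (0:ℝ≥0∞) < 1)]
      with n hn hlt
    by_contra hempty
    push_neg at hempty
    have huniv : {w : Fin n → E × ℝ | ¬ ∀ x, |A n w x - μtil x| < η n} = Set.univ := by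
      ext w
      simp only [Set.mem_setOf_eq, Set.mem_univ, iff_true]
      intro hw
      obtain ⟨x, hx⟩ := hempty w
      exact absurd (hw x) (not_lt.2 hx)
    rw [huniv] at hn
    have : (1:ℝ≥0∞) ≤ ENNReal.ofReal (ρ n) := by
      haveI : IsProbabilityMeasure (Measure.pi fun _ : Fin n => P) :=
        MeasureTheory.Measure.pi.instIsProbabilityMeasure _
      rw [← measure_univ (μ := (Measure.pi fun _ : Fin n => P))]
      exact hn
    exact absurd (lt_of_le_of_lt this hlt) (lt_irrefl _)
  have hmtil : Measurable μtil := measurable_of_unif_approx A hA μtil η hη hgood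
  -- residual
  set R : E × ℝ → ℝ := fun q => |q.2 - μtil q.1| with hRdef
  have hRmeas : Measurable R := (measurable_snd.sub (hmtil.comp measurable_fst)).abs
  have hR0 : ∀ q, 0 ≤ R q := fun q => abs_nonneg _
  -- levels
  have hN1 : (1:ℝ) < (N:ℝ) := by exact_mod_cast lt_of_lt_of_le one_lt_two hN
  have hNpos : (0:ℝ) < (N:ℝ) := lt_trans one_pos hN1
  obtain ⟨γ, hγ⟩ : ∃ g : ℝ, g = (α - α / (N:ℝ)) / 3 := ⟨_, rfl⟩
  have hγpos : 0 < γ := by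
    have : α / N < α := div_lt_self hα0 hN1
    rw [hγ]; linarith
  have hid : 1 - α / (N:ℝ) = 1 - α + 3 * γ := by rw [hγ]; ring
  have hαN1 : α / (N:ℝ) < 1 := by
    have : α / N < α := div_lt_self hα0 hN1
    linarith
  obtain ⟨p₁, hp₁def⟩ : ∃ g : ℝ, g = 1 - α + γ := ⟨_, rfl⟩
  obtain ⟨p₂, hp₂def⟩ : ∃ g : ℝ, g = 1 - α + 2 * γ := ⟨_, rfl⟩
  have hp₁mem : p₁ ∈ Set.Ioo (0:ℝ) 1 := by
    constructor
    · rw [hp₁def]; linarith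
    · rw [hp₁def]
      have : 1 - α + 3*γ < 1 := by rw [← hid]; linarith [div_pos hα0 hNpos]
      linarith
  have hp₂mem : p₂ ∈ Set.Ioo (0:ℝ) 1 := by
    constructor
    · rw [hp₂def]; linarith
    · rw [hp₂def]
      have : 1 - α + 3*γ < 1 := by rw [← hid]; linarith [div_pos hα0 hNpos]
      linarith
  obtain ⟨t₁, ht₁0, hFt₁⟩ := cdf_exists_eq P hRmeas hR0 hcont hp₁mem
  obtain ⟨t₂, _, hFt₂⟩ := cdf_exists_eq P hRmeas hR0 hcont hp₂mem
  have ht₁₂ : t₁ < t₂ := by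
    by_contra hle
    push_neg at hle
    have hmono2 : (P {ω | R ω ≤ t₂}).toReal ≤ (P {ω | R ω ≤ t₁}).toReal :=
      ENNReal.toReal_mono (measure_ne_top _ _)
        (measure_mono fun ω h => le_trans h hle)
    rw [hFt₁, hFt₂] at hmono2
    rw [hp₁def, hp₂def] at hmono2
    linarith
  have ht₂pos : 0 < t₂ := lt_of_le_of_lt ht₁0 ht₁₂
  obtain ⟨ε, hε⟩ : ∃ g : ℝ, g = γ / 2 := ⟨_, rfl⟩
  have hεpos : 0 < ε := by rw [hε]; positivity
  -- the bound sequence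
  set b : ℕ → ℝ≥0∞ := fun n =>
    (N:ℝ≥0∞) * ENNReal.ofReal (ρ n) + ENNReal.ofReal (1 / (n * ε ^ 2))
      + (N:ℝ≥0∞) * ENNReal.ofReal (1 / (n * ε ^ 2)) with hb
  have hbten : Tendsto b atTop (nhds 0) := by
    have h1 : Tendsto (fun n => ENNReal.ofReal (ρ n)) atTop (nhds 0) := by
      have := ENNReal.tendsto_ofReal hρ0
      simpa using this
    have h2 : Tendsto (fun n : ℕ => (1:ℝ) / (n * ε ^ 2)) atTop (nhds 0) := by
      have := tendsto_one_div_atTop_nhds_zero_nat.mul_const (1 / ε ^ 2)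
      rw [zero_mul] at this
      exact this.congr fun n => one_div_mul_one_div _ _
    have h2' : Tendsto (fun n : ℕ => ENNReal.ofReal (1 / (n * ε ^ 2))) atTop (nhds 0) := by
      have := ENNReal.tendsto_ofReal h2
      simpa using this
    have hNne : (N:ℝ≥0∞) ≠ ⊤ := ENNReal.natCast_ne_top N
    have hm1 : Tendsto (fun n => (N:ℝ≥0∞) * ENNReal.ofReal (ρ n)) atTop (nhds 0) := by
      have := ENNReal.Tendsto.const_mul (a := (N:ℝ≥0∞)) h1 (Or.inr hNne)
      rwa [mul_zero] at this
    have hm2 : Tendsto (fun n : ℕ => (N:ℝ≥0∞) * ENNReal.ofReal (1 / (n * ε ^ 2))) atTop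
        (nhds 0) := by
      have := ENNReal.Tendsto.const_mul (a := (N:ℝ≥0∞)) h2' (Or.inr hNne)
      rwa [mul_zero] at this
    have := (hm1.add h2').add hm2
    rw [add_zero, add_zero] at this
    exact this
  -- main eventual lower bound
  have hmulγ : Tendsto (fun n : ℕ => (n:ℝ) * (γ/2)) atTop atTop :=
    Tendsto.atTop_mul_const (by positivity) tendsto_natCast_atTop_atTop
  have hmulαN : Tendsto (fun n : ℕ => (n:ℝ) * (α/N)) atTop atTop :=
    Tendsto.atTop_mul_const (by positivity) tendsto_natCast_atTop_atTop
  have hlow : ∀ᶠ n in atTop,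
      1 - b n ≤ (Measure.pi fun _ : Fin (n + n + 1) => P)
          {z | let fit : Fin N → E → ℝ := fun j =>
                 A n (fun k : Fin n => z ((τ n j (Fin.castAdd n k)).castSucc));
               let d : Fin N → ℝ → ℝ := fun j β =>
                 kthSmallest Finset.univ
                   (fun k : Fin n =>
                     |(z ((τ n j (Fin.natAdd n k)).castSucc)).2
                       - fit j (z ((τ n j (Fin.natAdd n k)).castSucc)).1|)
                   ⌈((n : ℝ) + 1) * β⌉₊;
               let x : E := (z (Fin.last (n + n))).1;
               volume (Set.Icc (fit ⟨0, by omega⟩ x - d ⟨0, by omega⟩ (1 - α))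
                       (fit ⟨0, by omega⟩ x + d ⟨0, by omega⟩ (1 - α)))
                 < volume (⋂ j : Fin N,
                     Set.Icc (fit j x - d j (1 - α / N)) (fit j x + d j (1 - α / N)))} := by
    filter_upwards [hstab, eventually_ge_atTop 1,
      hmulγ.eventually_ge_atTop (2 - α),
      hmulαN.eventually_ge_atTop (2 - α/N),
      hη.eventually_lt_const (show (0:ℝ) < (t₂ - t₁)/3 by linarith),
      hη.eventually_lt_const (show (0:ℝ) < t₂/2 by linarith)]
      with n hstabn hn1 hev1 hev2 hev3 hev4

    -- basic numeric facts
    set μn : Measure (Fin (n+n+1) → E × ℝ) := Measure.pi fun _ => P with hμn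
    haveI : IsProbabilityMeasure μn := MeasureTheory.Measure.pi.instIsProbabilityMeasure _
    set k₁ : ℕ := ⌈((n:ℝ) + 1) * (1 - α)⌉₊ with hk₁def
    set k₂ : ℕ := ⌈((n:ℝ) + 1) * (1 - α / N)⌉₊ with hk₂def
    have hnR : (1:ℝ) ≤ (n:ℝ) := by exact_mod_cast hn1
    have hk₁pos : 1 ≤ k₁ := by
      rw [hk₁def]
      exact Nat.one_le_iff_ne_zero.2 (Nat.ceil_pos.2 (by nlinarith)).ne'
    have hk₁le : (k₁:ℝ) ≤ (n:ℝ) * (p₁ - ε) := by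
      have hceil : (k₁:ℝ) < ((n:ℝ)+1)*(1-α) + 1 := by
        rw [hk₁def]; exact Nat.ceil_lt_add_one (by nlinarith)
      have e1 : (n:ℝ)*(p₁ - ε) = (n:ℝ)*(1-α) + (n:ℝ)*(γ/2) := by rw [hp₁def, hε]; ring
      have e2 : ((n:ℝ)+1)*(1-α) + 1 = (n:ℝ)*(1-α) + (2-α) := by ring
      linarith
    have hk₁n : k₁ ≤ n := by
      have h1 : (n:ℝ)*(p₁ - ε) ≤ (n:ℝ)*1 := by
        refine mul_le_mul_of_nonneg_left ?_ (by positivity)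
        have := hp₁mem.2
        rw [hp₁def] at this ⊢
        rw [hε]; linarith
      have : (k₁:ℝ) ≤ (n:ℝ) := by linarith
      exact_mod_cast this
    have hk₂ge : (n:ℝ) * (p₂ + ε) ≤ (k₂:ℝ) := by
      have hceil : ((n:ℝ)+1)*(1 - α/N) ≤ (k₂:ℝ) := by rw [hk₂def]; exact Nat.le_ceil _
      rw [hid] at hceil
      have e1 : (n:ℝ)*(p₂+ε) = (n:ℝ)*(1-α+3*γ) - (n:ℝ)*(γ/2) := by rw [hp₂def, hε]; ring
      have e2 : ((n:ℝ)+1)*(1-α+3*γ) = (n:ℝ)*(1-α+3*γ) + (1-α+3*γ) := by ring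
      have h4 : (0:ℝ) ≤ (n:ℝ)*(γ/2) := by positivity
      have h5 : (0:ℝ) < 1-α+3*γ := by rw [← hid]; linarith
      linarith
    have hk₂n : k₂ ≤ n := by
      have hceil : (k₂:ℝ) < ((n:ℝ)+1)*(1-α/N) + 1 := by
        rw [hk₂def]
        exact Nat.ceil_lt_add_one (by nlinarith)
      have e2 : ((n:ℝ)+1)*(1-α/N) + 1 = (n:ℝ) - ((n:ℝ)*(α/N) - (2 - α/N)) := by ring
      have : (k₂:ℝ) ≤ (n:ℝ) := by linarith
      exact_mod_cast this
    have hk₂pos : 1 ≤ k₂ := by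
      by_contra h
      push_neg at h
      have hz : k₂ = 0 := by omega
      rw [hz] at hk₂ge
      have h0 : (0:ℝ) < p₂ + ε := by
        have := hp₂mem.1
        rw [hε]; linarith
      have h1 : (0:ℝ) < (n:ℝ)*(p₂+ε) := by positivity
      rw [Nat.cast_zero] at hk₂ge
      linarith
    have hη3 : 3 * η n < t₂ - t₁ := by linarith
    have hη2 : 2 * η n < t₂ := by linarith
    -- index selection maps
    set j₀ : Fin N := ⟨0, by omega⟩ with hj₀def
    set gfit : Fin N → Fin n → Fin (n+n+1) :=
      fun j k => (τ n j (Fin.castAdd n k)).castSucc with hgfitdef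
    set grank : Fin N → Fin n → Fin (n+n+1) :=
      fun j k => (τ n j (Fin.natAdd n k)).castSucc with hgrankdef
    have hgfitinj : ∀ j, Function.Injective (gfit j) := by
      intro j a b h
      rw [hgfitdef] at h
      have h1 : (τ n j) (Fin.castAdd n a) = (τ n j) (Fin.castAdd n b) :=
        Fin.castSucc_injective _ h
      have h2 := (τ n j).injective h1
      have h3 : (a:ℕ) = (b:ℕ) := by simpa using congrArg Fin.val h2
      exact Fin.ext h3
    have hgrankinj : ∀ j, Function.Injective (grank j) := by
      intro j a b h
      rw [hgrankdef] at h
      have h1 : (τ n j) (Fin.natAdd n a) = (τ n j) (Fin.natAdd n b) :=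
        Fin.castSucc_injective _ h
      have h2 := (τ n j).injective h1
      have h3 : n + (a:ℕ) = n + (b:ℕ) := by simpa using congrArg Fin.val h2
      exact Fin.ext (by omega)
    -- bad sets
    set Sbad : Set (Fin n → E × ℝ) := {w | ¬ ∀ x, |A n w x - μtil x| < η n} with hSbaddef
    set B₁ : Set (E × ℝ) := {q | R q ≤ t₁} with hB₁def
    set B₂ : Set (E × ℝ) := {q | R q ≤ t₂} with hB₂def
    have hB₁m : MeasurableSet B₁ := hRmeas measurableSet_Iic
    have hB₂m : MeasurableSet B₂ := hRmeas measurableSet_Iic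
    set W₁ : Set (Fin n → E × ℝ) :=
      {w | (Finset.univ.filter fun i => w i ∈ B₁).card < k₁} with hW₁def
    set W₂ : Set (Fin n → E × ℝ) :=
      {w | k₂ ≤ (Finset.univ.filter fun i => w i ∈ B₂).card} with hW₂def
    have hcount : ∀ (B : Set (E × ℝ)), MeasurableSet B →
        Measurable (fun w : Fin n → E × ℝ => (Finset.univ.filter fun i => w i ∈ B).card) := by
      intro B hB
      have heq : (fun w : Fin n → E × ℝ => (Finset.univ.filter fun i => w i ∈ B).card)
          = fun w => ∑ i, if w i ∈ B then 1 else 0 := by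
        funext w; rw [Finset.card_filter]
      rw [heq]
      exact Finset.measurable_sum _ fun i _ =>
        Measurable.ite ((measurable_pi_apply i) hB) measurable_const measurable_const
    have hW₁m : MeasurableSet W₁ := by
      have h := (hcount B₁ hB₁m) (MeasurableSet.of_discrete (s := Set.Iio k₁))
      exact h
    have hW₂m : MeasurableSet W₂ := by
      have h := (hcount B₂ hB₂m) (MeasurableSet.of_discrete (s := Set.Ici k₂))
      exact h
    set U : Set (Fin (n+n+1) → E × ℝ) :=
      ((⋃ j : Fin N, (fun z => z ∘ gfit j) ⁻¹' Sbad) ∪ (fun z => z ∘ grank j₀) ⁻¹' W₁)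
        ∪ ⋃ j : Fin N, (fun z => z ∘ grank j) ⁻¹' W₂ with hUdef
    -- measure bounds on bad sets
    have hbd1 : ∀ j, μn ((fun z : Fin (n+n+1) → E × ℝ => z ∘ gfit j) ⁻¹' Sbad)
        ≤ ENNReal.ofReal (ρ n) := by
      intro j
      have hmp := measurePreserving_comp_inj P (gfit j) (hgfitinj j)
      calc μn ((fun z : Fin (n+n+1) → E × ℝ => z ∘ gfit j) ⁻¹' Sbad)
          ≤ (μn.map (fun z => z ∘ gfit j)) Sbad :=
            Measure.le_map_apply (hmp.measurable.aemeasurable) _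
        _ = (Measure.pi fun _ : Fin n => P) Sbad := by rw [hμn, hmp.map_eq]
        _ ≤ ENNReal.ofReal (ρ n) := hstabn
    have hch1 : (Measure.pi fun _ : Fin n => P) W₁ ≤ ENNReal.ofReal (1/(n*ε^2)) := by
      refine le_trans (measure_mono ?_) (chebyshev_count P hB₁m hn1 hεpos)
      intro w hw
      rw [hW₁def] at hw
      simp only [Set.mem_setOf_eq] at hw ⊢
      rw [show (P B₁).toReal = p₁ from hFt₁]
      have hcw : ((Finset.univ.filter fun i => w i ∈ B₁).card : ℝ) < (k₁:ℝ) := by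
        exact_mod_cast hw
      refine le_abs.2 (Or.inr ?_)
      have e1 : (n:ℝ)*(p₁ - ε) = (n:ℝ)*p₁ - (n:ℝ)*ε := by ring
      linarith
    have hbd2 : μn ((fun z : Fin (n+n+1) → E × ℝ => z ∘ grank j₀) ⁻¹' W₁)
        ≤ ENNReal.ofReal (1/(n*ε^2)) := by
      have hmp := measurePreserving_comp_inj P (grank j₀) (hgrankinj j₀)
      rw [hμn, hmp.measure_preimage hW₁m.nullMeasurableSet]
      exact hch1
    have hch2 : (Measure.pi fun _ : Fin n => P) W₂ ≤ ENNReal.ofReal (1/(n*ε^2)) := by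
      refine le_trans (measure_mono ?_) (chebyshev_count P hB₂m hn1 hεpos)
      intro w hw
      rw [hW₂def] at hw
      simp only [Set.mem_setOf_eq] at hw ⊢
      rw [show (P B₂).toReal = p₂ from hFt₂]
      have hcw : (k₂:ℝ) ≤ ((Finset.univ.filter fun i => w i ∈ B₂).card : ℝ) := by
        exact_mod_cast hw
      refine le_abs.2 (Or.inl ?_)
      have e1 : (n:ℝ)*(p₂ + ε) = (n:ℝ)*p₂ + (n:ℝ)*ε := by ring
      linarith
    have hbd3 : ∀ j, μn ((fun z : Fin (n+n+1) → E × ℝ => z ∘ grank j) ⁻¹' W₂)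
        ≤ ENNReal.ofReal (1/(n*ε^2)) := by
      intro j
      have hmp := measurePreserving_comp_inj P (grank j) (hgrankinj j)
      rw [hμn, hmp.measure_preimage hW₂m.nullMeasurableSet]
      exact hch2
    have hUbd : μn U ≤ b n := by
      rw [hUdef, hb]
      refine le_trans (measure_union_le _ _) (add_le_add (le_trans (measure_union_le _ _)
        (add_le_add ?_ hbd2)) ?_)
      · refine le_trans (measure_iUnion_fintype_le _ _) ?_
        calc ∑ j : Fin N, μn ((fun z => z ∘ gfit j) ⁻¹' Sbad)
            ≤ ∑ _j : Fin N, ENNReal.ofReal (ρ n) := Finset.sum_le_sum fun j _ => hbd1 j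
          _ = (N:ℝ≥0∞) * ENNReal.ofReal (ρ n) := by
              rw [Finset.sum_const, Finset.card_univ, Fintype.card_fin, nsmul_eq_mul]
      · refine le_trans (measure_iUnion_fintype_le _ _) ?_
        calc ∑ j : Fin N, μn ((fun z => z ∘ grank j) ⁻¹' W₂)
            ≤ ∑ _j : Fin N, ENNReal.ofReal (1/(n*ε^2)) := Finset.sum_le_sum fun j _ => hbd3 j
          _ = (N:ℝ≥0∞) * ENNReal.ofReal (1/(n*ε^2)) := by
              rw [Finset.sum_const, Finset.card_univ, Fintype.card_fin, nsmul_eq_mul]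
    -- the good event implies the desired inequality
    have hincl : Uᶜ ⊆ {z : Fin (n+n+1) → E × ℝ |
        let fit : Fin N → E → ℝ := fun j =>
          A n (fun k : Fin n => z ((τ n j (Fin.castAdd n k)).castSucc));
        let d : Fin N → ℝ → ℝ := fun j β =>
          kthSmallest Finset.univ
            (fun k : Fin n =>
              |(z ((τ n j (Fin.natAdd n k)).castSucc)).2
                - fit j (z ((τ n j (Fin.natAdd n k)).castSucc)).1|)
            ⌈((n : ℝ) + 1) * β⌉₊;
        let x : E := (z (Fin.last (n + n))).1;
        volume (Set.Icc (fit ⟨0, by omega⟩ x - d ⟨0, by omega⟩ (1 - α))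
                (fit ⟨0, by omega⟩ x + d ⟨0, by omega⟩ (1 - α)))
          < volume (⋂ j : Fin N,
              Set.Icc (fit j x - d j (1 - α / N)) (fit j x + d j (1 - α / N)))} := by
      intro z hz
      rw [Set.mem_compl_iff, hUdef] at hz
      simp only [Set.mem_union, Set.mem_iUnion, Set.mem_preimage, not_or, not_exists] at hz
      obtain ⟨⟨hz1, hz2⟩, hz3⟩ := hz
      have hfit : ∀ (j : Fin N) (x : E), |A n (z ∘ gfit j) x - μtil x| < η n := by
        intro j
        have := hz1 j
        rw [hSbaddef] at this
        simpa only [Set.mem_setOf_eq, not_not] using this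
      set v : Fin N → Fin n → ℝ := fun j k => R (z (grank j k)) with hvdef
      set u : Fin N → Fin n → ℝ :=
        fun j k => |(z (grank j k)).2 - A n (z ∘ gfit j) (z (grank j k)).1| with hudef
      have huv : ∀ j k, u j k ≤ v j k + η n ∧ v j k ≤ u j k + η n := by
        intro j k
        have hf := hfit j (z (grank j k)).1
        have h1 : u j k - v j k ≤ |((z (grank j k)).2 - A n (z ∘ gfit j) (z (grank j k)).1)
            - ((z (grank j k)).2 - μtil (z (grank j k)).1)| := by
          rw [hudef, hvdef, hRdef]
          exact abs_sub_abs_le_abs_sub _ _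
        have h2 : v j k - u j k ≤ |((z (grank j k)).2 - μtil (z (grank j k)).1)
            - ((z (grank j k)).2 - A n (z ∘ gfit j) (z (grank j k)).1)| := by
          rw [hudef, hvdef, hRdef]
          exact abs_sub_abs_le_abs_sub _ _
        have e1 : ((z (grank j k)).2 - A n (z ∘ gfit j) (z (grank j k)).1)
            - ((z (grank j k)).2 - μtil (z (grank j k)).1)
            = -(A n (z ∘ gfit j) (z (grank j k)).1 - μtil (z (grank j k)).1) := by ring
        have e2 : ((z (grank j k)).2 - μtil (z (grank j k)).1)
            - ((z (grank j k)).2 - A n (z ∘ gfit j) (z (grank j k)).1)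
            = A n (z ∘ gfit j) (z (grank j k)).1 - μtil (z (grank j k)).1 := by ring
        rw [e1, abs_neg] at h1
        rw [e2] at h2
        constructor <;> linarith
      have hcnt1 : k₁ ≤ (Finset.univ.filter fun i => v j₀ i ≤ t₁).card := by
        have h2 := hz2
        rw [hW₁def] at h2
        simp only [Set.mem_setOf_eq, not_lt] at h2
        have heq : (Finset.univ.filter fun i => (z ∘ grank j₀) i ∈ B₁)
            = Finset.univ.filter fun i => v j₀ i ≤ t₁ :=
          Finset.filter_congr fun i _ => Iff.rfl
        rwa [heq] at h2
      have hcnt2 : ∀ j, (Finset.univ.filter fun i => v j i ≤ t₂).card < k₂ := by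
        intro j
        have h2 := hz3 j
        rw [hW₂def] at h2
        simp only [Set.mem_setOf_eq, not_le] at h2
        have heq : (Finset.univ.filter fun i => (z ∘ grank j) i ∈ B₂)
            = Finset.univ.filter fun i => v j i ≤ t₂ :=
          Finset.filter_congr fun i _ => Iff.rfl
        rwa [heq] at h2
      have hD₀ : kthSmallest Finset.univ (u j₀) k₁ ≤ t₁ + η n := by
        have hpert := kthSmallest_perturb (u j₀) (v j₀) (fun k => (huv j₀ k).1) hk₁pos hk₁n
        have hle := kthSmallest_le_of_count (v j₀) hk₁pos hcnt1
        linarith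
      have hdd : ∀ j, t₂ - η n ≤ kthSmallest Finset.univ (u j) k₂ := by
        intro j
        have hpert := kthSmallest_perturb (v j) (u j) (fun k => (huv j k).2) hk₂pos hk₂n
        have hge := le_kthSmallest_of_count_lt (v j) hk₂n (hcnt2 j)
        linarith
      exact interval_volume_lt
        (fun j : Fin N => A n (z ∘ gfit j) (z (Fin.last (n + n))).1)
        (fun j : Fin N => kthSmallest Finset.univ (u j) k₂)
        j₀ (kthSmallest Finset.univ (u j₀) k₁) (μtil (z (Fin.last (n + n))).1) t₁ t₂ (η n)
        (fun j => hfit j (z (Fin.last (n + n))).1) hD₀ hdd ht₁0 hη3 hη2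
    calc 1 - b n ≤ 1 - μn U := tsub_le_tsub_left hUbd 1
      _ ≤ μn Uᶜ := by
          have h := measure_union_le (μ := μn) U Uᶜ
          rw [Set.union_compl_self, measure_univ] at h
          exact tsub_le_iff_left.2 h
      _ ≤ _ := measure_mono hincl

  haveI : ∀ n : ℕ, IsProbabilityMeasure (Measure.pi fun _ : Fin (n + n + 1) => P) :=
    fun n => MeasureTheory.Measure.pi.instIsProbabilityMeasure _
  have hup : ∀ᶠ (n:ℕ) in atTop,
      (Measure.pi fun _ : Fin (n + n + 1) => P)
          {z | let fit : Fin N → E → ℝ := fun j =>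
                 A n (fun k : Fin n => z ((τ n j (Fin.castAdd n k)).castSucc));
               let d : Fin N → ℝ → ℝ := fun j β =>
                 kthSmallest Finset.univ
                   (fun k : Fin n =>
                     |(z ((τ n j (Fin.natAdd n k)).castSucc)).2
                       - fit j (z ((τ n j (Fin.natAdd n k)).castSucc)).1|)
                   ⌈((n : ℝ) + 1) * β⌉₊;
               let x : E := (z (Fin.last (n + n))).1;
               volume (Set.Icc (fit ⟨0, by omega⟩ x - d ⟨0, by omega⟩ (1 - α))
                       (fit ⟨0, by omega⟩ x + d ⟨0, by omega⟩ (1 - α)))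
                 < volume (⋂ j : Fin N,
                     Set.Icc (fit j x - d j (1 - α / N)) (fit j x + d j (1 - α / N)))}
        ≤ 1 :=
    Eventually.of_forall fun n => prob_le_one
  have hlim : Tendsto (fun n => 1 - b n) atTop (nhds 1) := by
    have := ENNReal.Tendsto.sub (tendsto_const_nhds (x := (1:ℝ≥0∞))) hbten
      (Or.inl ENNReal.one_ne_top)
    simpa using this
  exact tendsto_of_tendsto_of_tendsto_of_le_of_le' hlim tendsto_const_nhds hlow hup
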